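/- For positive integers n ≤ m, the sum over i = 1 to n of binomial(n+m−2i+3, 3), minus binomial(m+2,4), minus binomial(n+2,4), plus binomial(m−n+2,4), equals binomial(n+1,2)·binomial(m+1,2). -/

import Mathlib

set_option maxHeartbeats 1000000

lemma two_choose_two (x : ℕ) : ((x + 1).choose 2 : ℤ) * 2 = x * (x + 1) := by
  induction x with
  | zero => decide
  | succ k ih =>
    rw [show k + 1 + 1 = (k + 1) + 1 from rfl, Nat.choose_succ_succ (k + 1) 1]
    push_cast
    simp [Nat.choose_one_right] at *
    push_cast
    linarith [ih]

lemma six_choose_three (x : ℕ) : ((x + 2).choose 3 : ℤ) * 6 = x * (x + 1) * (x + 2) := by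
  induction x with
  | zero => decide
  | succ k ih =>
    rw [show k + 1 + 2 = (k + 2) + 1 from rfl, Nat.choose_succ_succ (k + 2) 2]
    push_cast
    have h2 := two_choose_two (k + 1)
    push_cast at h2
    linarith [ih, h2]

lemma tf_choose_four (x : ℕ) : ((x + 2).choose 4 : ℤ) * 24 = ((x : ℤ) - 1) * x * (x + 1) * (x + 2) := by
  induction x with
  | zero => decide
  | succ k ih =>
    rw [show k + 1 + 2 = (k + 2) + 1 from rfl, Nat.choose_succ_succ (k + 2) 3]
    push_cast
    have h3 := six_choose_three k
    push_cast at h3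
    push_cast at ih
    ring_nf
    ring_nf at ih h3
    linarith [ih, h3]

lemma key_sum (d : ℕ) : ∀ n : ℕ,
    (∑ j ∈ Finset.range n, ((2 * j + d + 3).choose 3 : ℤ))
      - ((n + d + 2).choose 4 : ℤ) - ((n + 2).choose 4 : ℤ) + ((d + 2).choose 4 : ℤ) =
      ((n + 1).choose 2 : ℤ) * ((n + d + 1).choose 2 : ℤ) := by
  intro n
  induction n with
  | zero => simp [Nat.choose]; ring
  | succ k ih =>
    rw [Finset.sum_range_succ]
    have a1 : ((2 * k + d + 3).choose 3 : ℤ) * 6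
        = ((2 * k + d + 1 : ℕ) : ℤ) * ((2 * k + d + 1 : ℕ) + 1) * ((2 * k + d + 1 : ℕ) + 2) := by
      have := six_choose_three (2 * k + d + 1)
      convert this using 3 <;> push_cast <;> ring
    have aq1 : ((k + 1 + d + 2).choose 4 : ℤ) * 24
        = (((k + d + 1 : ℕ) : ℤ) - 1) * ((k + d + 1 : ℕ)) * ((k + d + 1 : ℕ) + 1) * ((k + d + 1 : ℕ) + 2) := by
      have := tf_choose_four (k + d + 1)
      convert this using 3 <;> push_cast <;> ring
    have aq2 : ((k + d + 2).choose 4 : ℤ) * 24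
        = (((k + d : ℕ) : ℤ) - 1) * ((k + d : ℕ)) * ((k + d : ℕ) + 1) * ((k + d : ℕ) + 2) := by
      have := tf_choose_four (k + d)
      convert this using 3 <;> push_cast <;> ring
    have aq3 : ((k + 1 + 2).choose 4 : ℤ) * 24
        = (((k + 1 : ℕ) : ℤ) - 1) * ((k + 1 : ℕ)) * ((k + 1 : ℕ) + 1) * ((k + 1 : ℕ) + 2) := by
      have := tf_choose_four (k + 1)
      convert this using 3 <;> push_cast <;> ring
    have aq4 : ((k + 2).choose 4 : ℤ) * 24
        = (((k : ℕ) : ℤ) - 1) * ((k : ℕ)) * ((k : ℕ) + 1) * ((k : ℕ) + 2) :=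
      tf_choose_four k
    have b1 := two_choose_two (k + 1)
    have b2 := two_choose_two (k + d + 1)
    have b3 := two_choose_two k
    have b4 := two_choose_two (k + d)
    have prR : (4 : ℤ) * (((k + 1 + 1).choose 2 : ℤ) * ((k + 1 + d + 1).choose 2 : ℤ))
        = (((k:ℤ) + 1) * ((k:ℤ) + 2)) * (((k:ℤ) + (d:ℤ) + 1) * ((k:ℤ) + (d:ℤ) + 2)) := by
      have hb1 : ((k + 1 + 1).choose 2 : ℤ) * 2 = ((k:ℤ) + 1) * ((k:ℤ) + 2) := by
        have := two_choose_two (k + 1); push_cast at this ⊢; linarith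
      have hb2 : ((k + 1 + d + 1).choose 2 : ℤ) * 2 = ((k:ℤ) + (d:ℤ) + 1) * ((k:ℤ) + (d:ℤ) + 2) := by
        have := two_choose_two (k + d + 1); push_cast at this ⊢
        have h : ((k + 1 + d + 1).choose 2 : ℤ) = ((k + d + 1 + 1).choose 2 : ℤ) := by
          norm_cast; congr 1; omega
        rw [h]; linarith
      nlinarith [hb1, hb2]
    have prP : (4 : ℤ) * (((k + 1).choose 2 : ℤ) * ((k + d + 1).choose 2 : ℤ))
        = ((k:ℤ) * ((k:ℤ) + 1)) * (((k:ℤ) + (d:ℤ)) * ((k:ℤ) + (d:ℤ) + 1)) := by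
      push_cast at b3 b4
      nlinarith [b3, b4]
    have key : (24 : ℤ) * ((∑ j ∈ Finset.range k, ((2 * j + d + 3).choose 3 : ℤ))
        + ((2 * k + d + 3).choose 3 : ℤ)
        - ((k + 1 + d + 2).choose 4 : ℤ) - ((k + 1 + 2).choose 4 : ℤ) + ((d + 2).choose 4 : ℤ))
        = 24 * (((k + 1 + 1).choose 2 : ℤ) * ((k + 1 + d + 1).choose 2 : ℤ)) := by
      push_cast at a1 aq1 aq2 aq3 aq4 ⊢
      linear_combination 24 * ih + 4 * a1 - aq1 - aq3 + aq2 + aq4 - 6 * prR + 6 * prP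
    have h24 : (24 : ℤ) ≠ 0 := by norm_num
    have := mul_left_cancel₀ h24 key
    push_cast at this ⊢
    linarith [this]

/-- For positive integers `n ≤ m`,
`∑_{i=1}^n C(n+m−2i+3,3) − C(m+2,4) − C(n+2,4) + C(m−n+2,4) = C(n+1,2)·C(m+1,2)`. -/
theorem quadruple_count_identity (n m : ℕ) (hn : 0 < n) (hnm : n ≤ m) :
    (∑ i ∈ Finset.Icc 1 n, ((n + m - 2 * i + 3).choose 3 : ℤ))
      - ((m + 2).choose 4 : ℤ) - ((n + 2).choose 4 : ℤ) + ((m - n + 2).choose 4 : ℤ) =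
      ((n + 1).choose 2 : ℤ) * ((m + 1).choose 2 : ℤ) := by
  obtain ⟨d, rfl⟩ := Nat.exists_eq_add_of_le hnm
  have hmn : n + d - n = d := by omega
  rw [hmn]
  have hs : (∑ i ∈ Finset.Icc 1 n, ((n + (n + d) - 2 * i + 3).choose 3 : ℤ))
      = ∑ j ∈ Finset.range n, ((2 * j + d + 3).choose 3 : ℤ) := by
    rw [show Finset.Icc 1 n = Finset.Ico 1 (n + 1) by rfl, Finset.sum_Ico_eq_sum_range]
    simp only [Nat.add_sub_cancel]
    rw [← Finset.sum_range_reflect (fun j => ((2 * j + d + 3).choose 3 : ℤ)) n]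
    apply Finset.sum_congr rfl
    intro i hi
    rw [Finset.mem_range] at hi
    congr 2
    omega
  rw [hs]
  exact key_sum d n
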